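/- arXiv:1007.0797 — 6 statements merged into one kernel-verified Lean document; each statement's English description precedes it below -/
import Mathlib

section
/- Let G be a finite vertex-transitive graph. Then for every independent set A of G, |A|/|N[A]| ≤ α(G)/|V(G)|, where N[A] is the closed neighborhood of A (the set A together with all vertices adjacent to a vertex of A). -/
open Finset SimpleGraph

variable {α β : Type*}

/-- The direct (tensor) product of two simple graphs. -/
def tensorProd (G : SimpleGraph α) (H : SimpleGraph β) : SimpleGraph (α × β) where
  Adj x y := G.Adj x.1 y.1 ∧ H.Adj x.2 y.2
  symm := ⟨fun _ _ h => ⟨h.1.symm, h.2.symm⟩⟩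
  loopless := ⟨fun x h => G.loopless.irrefl x.1 h.1⟩

/-- A set of vertices is independent iff it is a clique in the complement. -/
def IsIndepSet (G : SimpleGraph α) (s : Set α) : Prop := Gᶜ.IsClique s

/-- The independence number: the clique number of the complement. -/
noncomputable def indepNum (G : SimpleGraph α) : ℕ := Gᶜ.cliqueNum

/-- A graph is vertex-transitive if its automorphism group acts transitively. -/
def VertexTransitive (G : SimpleGraph α) : Prop := ∀ u v : α, ∃ φ : G ≃g G, φ u = v

/-- The closed neighborhood of a set of vertices. -/
def closedNbhd (G : SimpleGraph α) (A : Set α) : Set α :=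
  A ∪ {b | ∃ a ∈ A, G.Adj a b}

theorem stmt2 [Fintype α] (G : SimpleGraph α) (hG : VertexTransitive G)
    (A : Set α) (hA : _root_.IsIndepSet G A) :
    A.ncard * Fintype.card α ≤ _root_.indepNum G * (closedNbhd G A).ncard := by
  classical
  rcases isEmpty_or_nonempty α with hα | hα
  · simp [Fintype.card_eq_zero]
  haveI : Fintype (G ≃g G) :=
    Fintype.ofInjective (fun g : G ≃g G => (g : α → α)) (fun a b h => RelIso.ext (congrFun h))
  set Afin : Finset α := A.toFinset with hAfin
  set NA : Finset α := (closedNbhd G A).toFinset with hNA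
  have hANA : Afin ⊆ NA := by
    intro x hx
    rw [hNA, Set.mem_toFinset]
    exact Or.inl (by rwa [hAfin, Set.mem_toFinset] at hx)
  -- key lemma: for a maximum independent set K, |A| ≤ |K ∩ N[A]|
  have key : ∀ K : Finset α, Gᶜ.IsClique (K : Set α) → K.card = _root_.indepNum G →
      Afin.card ≤ (K ∩ NA).card := by
    intro K hK hKcard
    have hclique : Gᶜ.IsClique ((Afin ∪ (K \ NA) : Finset α) : Set α) := by
      intro x hx y hy hxy
      simp only [Finset.coe_union, Set.mem_union, Finset.mem_coe, Finset.mem_sdiff,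
        hAfin, hNA, Set.mem_toFinset] at hx hy
      have adjcase : ∀ a b : α, a ∈ A → b ∈ K ∧ b ∉ closedNbhd G A → a ≠ b → Gᶜ.Adj a b := by
        intro a b ha hb hab
        rw [SimpleGraph.compl_adj]
        exact ⟨hab, fun hadj => hb.2 (Or.inr ⟨a, ha, hadj⟩)⟩
      rcases hx with hx | hx <;> rcases hy with hy | hy
      · exact hA hx hy hxy
      · exact adjcase x y hx hy hxy
      · exact (adjcase y x hy hx hxy.symm).symm
      · exact hK hx.1 hy.1 hxy
    have hdisj : Disjoint Afin (K \ NA) := by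
      refine Finset.disjoint_left.mpr fun x hx hx' => ?_
      exact (Finset.mem_sdiff.mp hx').2 (hANA hx)
    have hle : (Afin ∪ (K \ NA)).card ≤ _root_.indepNum G :=
      IsClique.card_le_cliqueNum (tc := hclique)
    rw [Finset.card_union_of_disjoint hdisj] at hle
    have hsplit : (K ∩ NA).card + (K \ NA).card = K.card := Finset.card_inter_add_card_sdiff K NA
    omega
  -- maximum independent set
  obtain ⟨J, hJ⟩ := (Gᶜ).exists_isNClique_cliqueNum
  have hJclique : Gᶜ.IsClique (J : Set α) := hJ.1
  have hJcard : J.card = _root_.indepNum G := hJ.2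
  -- fibers of evaluation
  set Fix : α → α → Finset (G ≃g G) := fun u v => univ.filter (fun g => g u = v) with hFix
  obtain ⟨u₀⟩ := hα
  set s : ℕ := (Fix u₀ u₀).card with hs
  -- translation invariance of fiber sizes
  have h2 : ∀ (u v w : α) (φ : G ≃g G), φ v = w → (Fix u v).card = (Fix u w).card := by
    intro u v w φ hφ
    refine Finset.card_bij' (fun g _ => g.trans φ) (fun h _ => h.trans φ.symm) ?_ ?_ ?_ ?_
    · intro g hg
      simp only [hFix, Finset.mem_filter, Finset.mem_univ, true_and] at hg ⊢
      show φ (g u) = w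
      rw [hg, hφ]
    · intro h hh
      simp only [hFix, Finset.mem_filter, Finset.mem_univ, true_and] at hh ⊢
      show φ.symm (h u) = v
      rw [hh, ← hφ, RelIso.symm_apply_apply]
    · intro g _
      exact RelIso.ext fun x => φ.symm_apply_apply (g x)
    · intro h _
      exact RelIso.ext fun x => φ.apply_symm_apply (h x)
  have h1 : ∀ u v : α, (Fix u v).card = (Fix v u).card := by
    intro u v
    refine Finset.card_bij' (fun g _ => g.symm) (fun h _ => h.symm) ?_ ?_ ?_ ?_
    · intro g hg
      simp only [hFix, Finset.mem_filter, Finset.mem_univ, true_and] at hg ⊢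
      rw [← hg, RelIso.symm_apply_apply]
    · intro h hh
      simp only [hFix, Finset.mem_filter, Finset.mem_univ, true_and] at hh ⊢
      rw [← hh, RelIso.symm_apply_apply]
    · intro g _; rfl
    · intro h _; rfl
  have hconst : ∀ u v : α, (Fix u v).card = s := by
    intro u v
    obtain ⟨φ, hφ⟩ := hG v u₀
    obtain ⟨ψ, hψ⟩ := hG u u₀
    calc (Fix u v).card = (Fix u u₀).card := h2 u v u₀ φ hφ
      _ = (Fix u₀ u).card := h1 u u₀
      _ = (Fix u₀ u₀).card := h2 u₀ u u₀ ψ hψ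
  have spos : 0 < s := by
    rw [hs]
    exact Finset.card_pos.mpr ⟨RelIso.refl _, by simp [hFix]⟩
  -- |Aut G| = n * s
  have hcardΓ : Fintype.card (G ≃g G) = Fintype.card α * s := by
    rw [← Finset.card_univ, Finset.card_eq_sum_card_fiberwise
      (f := fun g : G ≃g G => g u₀) (t := univ) (fun _ _ => mem_univ _)]
    calc ∑ v : α, (univ.filter (fun g : G ≃g G => g u₀ = v)).card
        = ∑ _v : α, s := Finset.sum_congr rfl fun v _ => hconst u₀ v
      _ = Fintype.card α * s := by rw [Finset.sum_const, smul_eq_mul, Finset.card_univ]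
  -- the double counting sum
  have hsum : ∑ g : G ≃g G, ((J.image g) ∩ NA).card = NA.card * (_root_.indepNum G * s) := by
    have step1 : ∀ g : G ≃g G, ((J.image g) ∩ NA).card
        = ∑ v ∈ NA, if v ∈ J.image g then 1 else 0 := by
      intro g
      rw [← Finset.card_filter, Finset.filter_mem_eq_inter, Finset.inter_comm]
    calc ∑ g : G ≃g G, ((J.image g) ∩ NA).card
        = ∑ g : G ≃g G, ∑ v ∈ NA, if v ∈ J.image g then 1 else 0 :=
          Finset.sum_congr rfl fun g _ => step1 g
      _ = ∑ v ∈ NA, ∑ g : G ≃g G, if v ∈ J.image g then 1 else 0 := Finset.sum_comm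
      _ = ∑ v ∈ NA, (univ.filter (fun g : G ≃g G => v ∈ J.image g)).card :=
          Finset.sum_congr rfl fun v _ => (Finset.card_filter _ _).symm
      _ = ∑ v ∈ NA, (_root_.indepNum G * s) := by
          refine Finset.sum_congr rfl fun v _ => ?_
          have hbU : univ.filter (fun g : G ≃g G => v ∈ J.image g)
              = J.biUnion (fun u => Fix u v) := by
            ext g
            simp [hFix, Finset.mem_image]
          have hdisj : ∀ u ∈ J, ∀ u' ∈ J, u ≠ u' → Disjoint (Fix u v) (Fix u' v) := by
            intro u _ u' _ huu'
            refine Finset.disjoint_left.mpr fun g hg hg' => huu' ?_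
            simp only [hFix, Finset.mem_filter, Finset.mem_univ, true_and] at hg hg'
            exact g.injective (hg.trans hg'.symm)
          rw [hbU, Finset.card_biUnion hdisj]
          calc ∑ u ∈ J, (Fix u v).card = ∑ _u ∈ J, s :=
                Finset.sum_congr rfl fun u _ => hconst u v
            _ = _root_.indepNum G * s := by rw [Finset.sum_const, smul_eq_mul, hJcard]
      _ = NA.card * (_root_.indepNum G * s) := by rw [Finset.sum_const, smul_eq_mul]
  -- lower bound on the sum
  have hlow : Fintype.card (G ≃g G) * Afin.card ≤ ∑ g : G ≃g G, ((J.image g) ∩ NA).card := by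
    rw [← Finset.card_univ, ← smul_eq_mul, ← Finset.sum_const]
    refine Finset.sum_le_sum fun g _ => ?_
    refine key (J.image g) ?_ ?_
    · intro x hx y hy hxy
      simp only [Finset.coe_image, Set.mem_image, Finset.mem_coe] at hx hy
      obtain ⟨u, hu, rfl⟩ := hx
      obtain ⟨w, hw, rfl⟩ := hy
      have huw : u ≠ w := fun h => hxy (by rw [h])
      have := hJclique hu hw huw
      rw [SimpleGraph.compl_adj] at this ⊢
      exact ⟨hxy, fun hadj => this.2 (g.map_adj_iff.mp hadj)⟩
    · rw [Finset.card_image_of_injective _ g.injective, hJcard]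
  -- combine
  have hmain : Fintype.card α * s * Afin.card ≤ NA.card * (_root_.indepNum G * s) := by
    rw [← hcardΓ]; exact hlow.trans hsum.le
  have hfin : Afin.card * Fintype.card α ≤ _root_.indepNum G * NA.card := by
    have : (Afin.card * Fintype.card α) * s ≤ (_root_.indepNum G * NA.card) * s := by
      calc (Afin.card * Fintype.card α) * s = Fintype.card α * s * Afin.card := by ring
        _ ≤ NA.card * (_root_.indepNum G * s) := hmain
        _ = (_root_.indepNum G * NA.card) * s := by ring
    exact Nat.le_of_mul_le_mul_right this spos
  rwa [Set.ncard_eq_toFinset_card' A, Set.ncard_eq_toFinset_card' (closedNbhd G A)]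
end

section
/- Let G be a finite vertex-transitive graph. Then for every n ≥ 1, α(Gⁿ) = α(G)·|V(G)|^{n-1}, where Gⁿ is the n-fold direct (tensor) power of G. -/
open Finset SimpleGraph

variable {α β : Type*}

/-- The n-fold direct (tensor) power of a graph: tuples are adjacent iff they are
adjacent in every coordinate (for n ≥ 1 the condition x ≠ y is automatic). -/
def tensorPow (G : SimpleGraph α) (n : ℕ) : SimpleGraph (Fin n → α) where
  Adj x y := x ≠ y ∧ ∀ i, G.Adj (x i) (y i)
  symm := ⟨fun _ _ h => ⟨h.1.symm, fun i => (h.2 i).symm⟩⟩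
  loopless := ⟨fun _ h => h.1 rfl⟩

/-- Independence of a finset, unfolded. -/
lemma indep_iff' (G : SimpleGraph α) (S : Finset α) :
    Gᶜ.IsClique ↑S ↔ ∀ x ∈ S, ∀ y ∈ S, ¬G.Adj x y := by
  constructor
  · intro h x hx y hy hadj
    exact (h (by simpa using hx) (by simpa using hy) hadj.ne).2 hadj
  · intro h x hx y hy hne
    exact ⟨hne, h x (by simpa using hx) y (by simpa using hy)⟩

lemma card_le_indepNum [Fintype α] (G : SimpleGraph α) {T : Finset α}
    (hT : ∀ x ∈ T, ∀ y ∈ T, ¬G.Adj x y) : T.card ≤ _root_.indepNum G :=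
  IsClique.card_le_cliqueNum (tc := (indep_iff' G T).mpr hT)

lemma indepNum_le_card [Fintype α] (G : SimpleGraph α) : _root_.indepNum G ≤ Fintype.card α := by
  obtain ⟨s, hs⟩ := (Gᶜ).exists_isNClique_cliqueNum
  rw [_root_.indepNum, ← hs.card_eq]
  exact s.card_le_univ

/-- The no-homomorphism lemma. -/
lemma nohom {α β : Type*} [Fintype α] [Fintype β] (G : SimpleGraph α) (H : SimpleGraph β)
    (f : α → β) (hf : ∀ a b, G.Adj a b → H.Adj (f a) (f b)) (hH : VertexTransitive H) :
    _root_.indepNum H * Fintype.card α ≤ _root_.indepNum G * Fintype.card β := by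
  classical
  obtain ⟨S, hS⟩ := (Hᶜ).exists_isNClique_cliqueNum
  have hSind : ∀ x ∈ S, ∀ y ∈ S, ¬H.Adj x y := (indep_iff' H S).mp hS.isClique
  set A : Finset (β ≃ β) :=
    univ.filter (fun σ => ∀ a b, H.Adj (σ a) (σ b) ↔ H.Adj a b) with hA
  have hidA : Equiv.refl β ∈ A := by simp [hA]
  have hApos : 0 < A.card := card_pos.2 ⟨_, hidA⟩
  -- all fibers of evaluation have the same size
  have heq : ∀ (s : β) (w w' : β),
      (A.filter fun σ => σ s = w).card = (A.filter fun σ => σ s = w').card := by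
    intro s w w'
    obtain ⟨φ, hφ⟩ := hH w w'
    have hφadj : ∀ a b, H.Adj (φ.toEquiv a) (φ.toEquiv b) ↔ H.Adj a b :=
      fun a b => φ.map_adj_iff
    have hφadj' : ∀ a b, H.Adj (φ.toEquiv.symm a) (φ.toEquiv.symm b) ↔ H.Adj a b := by
      intro a b
      rw [← hφadj (φ.toEquiv.symm a) (φ.toEquiv.symm b)]
      simp
    apply Finset.card_bij (fun σ _ => σ.trans φ.toEquiv)
    · intro σ hσ
      simp only [mem_filter, mem_univ, true_and, hA] at hσ ⊢
      refine ⟨fun a b => ?_, ?_⟩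
      · simp only [Equiv.trans_apply]
        rw [hφadj]
        exact hσ.1 a b
      · simp only [Equiv.trans_apply, hσ.2]
        exact hφ
    · intro σ hσ τ hτ h
      ext x
      have := congrArg (fun (e : β ≃ β) => e x) h
      exact φ.toEquiv.injective this
    · intro τ hτ
      simp only [mem_filter, mem_univ, true_and, hA] at hτ
      refine ⟨τ.trans φ.toEquiv.symm, ?_, ?_⟩
      · simp only [mem_filter, mem_univ, true_and, hA]
        refine ⟨fun a b => ?_, ?_⟩
        · simp only [Equiv.trans_apply]
          rw [hφadj']
          exact hτ.1 a b
        · simp only [Equiv.trans_apply, hτ.2, ← hφ]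
          exact φ.toEquiv.symm_apply_apply w
      · ext x
        simp
  have hcount : ∀ (s : β) (w : β),
      (A.filter fun σ => σ s = w).card * Fintype.card β = A.card := by
    intro s w
    have hpart : A.card = ∑ w' : β, (A.filter fun σ => σ s = w').card :=
      Finset.card_eq_sum_card_fiberwise (fun σ _ => mem_univ (σ s))
    rw [hpart]
    rw [Finset.sum_congr rfl (fun w' _ => heq s w' w)]
    rw [Finset.sum_const, Finset.card_univ, smul_eq_mul, mul_comm]
  -- double counting
  have hdc : ∑ σ ∈ A, (univ.filter fun a => f a ∈ S.image σ).card
      = ∑ a : α, ∑ s ∈ S, (A.filter fun σ => σ s = f a).card := by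
    have h1 : ∀ σ ∈ A, (univ.filter fun a => f a ∈ S.image σ).card
        = ∑ a : α, if f a ∈ S.image σ then 1 else 0 := by
      intro σ _; rw [Finset.card_filter]
    rw [Finset.sum_congr rfl h1, Finset.sum_comm]
    refine Finset.sum_congr rfl fun a _ => ?_
    have h2 : ∑ σ ∈ A, (if f a ∈ S.image ⇑σ then 1 else 0)
        = (A.filter fun σ : β ≃ β => f a ∈ S.image ⇑σ).card :=
      (Finset.card_filter _ _).symm
    rw [h2]
    have h3 : (A.filter fun σ : β ≃ β => f a ∈ S.image ⇑σ)
        = S.biUnion (fun s => A.filter fun σ => σ s = f a) := by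
      ext σ
      simp only [mem_filter, mem_biUnion, Finset.mem_image]
      tauto
    rw [h3, Finset.card_biUnion]
    intro s hs t ht hst
    simp only [Finset.disjoint_left, mem_filter]
    rintro σ ⟨_, h1'⟩ ⟨_, h2'⟩
    exact hst (σ.injective (h1'.trans h2'.symm))
  -- each fiber set is independent in G
  have hTle : ∀ σ ∈ A, (univ.filter fun a => f a ∈ S.image σ).card ≤ _root_.indepNum G := by
    intro σ hσ
    simp only [hA, mem_filter, mem_univ, true_and] at hσ
    apply card_le_indepNum
    intro x hx y hy hadj
    simp only [mem_filter, mem_univ, true_and, Finset.mem_image] at hx hy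
    obtain ⟨s, hs, hsx⟩ := hx
    obtain ⟨t, ht, hty⟩ := hy
    have : H.Adj (σ s) (σ t) := hsx.symm ▸ hty.symm ▸ hf x y hadj
    exact hSind s hs t ht ((hσ s t).mp this)
  -- combine
  have key : (∑ a : α, ∑ s ∈ S, (A.filter fun σ => σ s = f a).card) * Fintype.card β
      = Fintype.card α * S.card * A.card := by
    rw [Finset.sum_mul]
    rw [Finset.sum_congr rfl (fun a _ => Finset.sum_mul _ _ _)]
    rw [Finset.sum_congr rfl (fun a _ => Finset.sum_congr rfl (fun s _ => hcount s (f a)))]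
    simp only [Finset.sum_const, smul_eq_mul, Finset.card_univ]
    ring
  have hle : ∑ σ ∈ A, (univ.filter fun a => f a ∈ S.image σ).card ≤ A.card * _root_.indepNum G := by
    calc ∑ σ ∈ A, (univ.filter fun a => f a ∈ S.image σ).card
        ≤ ∑ _σ ∈ A, _root_.indepNum G := Finset.sum_le_sum hTle
      _ = A.card * _root_.indepNum G := by simp [mul_comm]
  have final : Fintype.card α * S.card * A.card ≤ A.card * _root_.indepNum G * Fintype.card β := by
    rw [← key, ← hdc]
    exact Nat.mul_le_mul_right _ hle
  have : A.card * (_root_.indepNum H * Fintype.card α) ≤ A.card * (_root_.indepNum G * Fintype.card β) := by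
    calc A.card * (_root_.indepNum H * Fintype.card α)
        = Fintype.card α * S.card * A.card := by rw [_root_.indepNum, ← hS.card_eq]; ring
      _ ≤ A.card * _root_.indepNum G * Fintype.card β := final
      _ = A.card * (_root_.indepNum G * Fintype.card β) := by ring
  exact Nat.le_of_mul_le_mul_left this hApos

lemma tensorPow_vt (G : SimpleGraph α) (hG : VertexTransitive G) (n : ℕ) :
    VertexTransitive (tensorPow G n) := by
  intro u v
  choose φ hφ using fun i => hG (u i) (v i)
  refine ⟨⟨Equiv.piCongrRight fun i => (φ i).toEquiv, ?_⟩, funext fun i => hφ i⟩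
  intro x y
  show (tensorPow G n).Adj _ _ ↔ (tensorPow G n).Adj x y
  simp only [tensorPow]
  constructor
  · rintro ⟨hne, hadj⟩
    refine ⟨fun h => hne (by rw [h]), fun i => ?_⟩
    have := hadj i
    simpa using (φ i).map_adj_iff.mp (by simpa using this)
  · rintro ⟨hne, hadj⟩
    refine ⟨fun h => hne ((Equiv.piCongrRight fun i => (φ i).toEquiv).injective h), fun i => ?_⟩
    simpa using (φ i).map_adj_iff.mpr (hadj i)

theorem stmt6 [Fintype α] (G : SimpleGraph α) (hG : VertexTransitive G)
    (n : ℕ) (hn : 1 ≤ n) :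
    _root_.indepNum (tensorPow G n) = _root_.indepNum G * Fintype.card α ^ (n - 1) := by
  classical
  have hcard : Fintype.card (Fin n → α) = Fintype.card α ^ n := by simp
  rcases Nat.eq_zero_or_pos (Fintype.card α) with h0 | hpos
  · have h1 : _root_.indepNum G = 0 := Nat.le_zero.mp (h0 ▸ indepNum_le_card G)
    have h2 : _root_.indepNum (tensorPow G n) = 0 := by
      have := indepNum_le_card (tensorPow G n)
      rw [hcard, h0] at this
      have hzn : (0 : ℕ) ^ n = 0 := by
        apply zero_pow; omega
      omega
    simp [h1, h2]
  · have i0 : Fin n := ⟨0, hn⟩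
    have hproj := nohom (tensorPow G n) G (fun x => x i0) (fun a b h => h.2 i0) hG
    have hdiag := nohom G (tensorPow G n) (fun a _ => a)
      (fun a b h => ⟨fun hc => h.ne (congrFun hc i0), fun _ => h⟩) (tensorPow_vt G hG n)
    rw [hcard] at hproj hdiag
    have hmain : _root_.indepNum (tensorPow G n) * Fintype.card α
        = _root_.indepNum G * Fintype.card α ^ n := le_antisymm hdiag hproj
    have hpow : Fintype.card α ^ n = Fintype.card α ^ (n - 1) * Fintype.card α := by
      rw [← pow_succ]
      congr 1
      omega
    apply Nat.eq_of_mul_eq_mul_right hpos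
    rw [hmain, hpow, ← mul_assoc]
end

section
/- Let G be a finite non-empty vertex-transitive graph with α(G)/|V(G)| = 1/2. Then G is bipartite. -/
open Finset SimpleGraph

variable {α β : Type*}

lemma aux_odd_walk {V : Type*} {G : SimpleGraph V}
    (h : ¬ G.Colorable 2) : ∃ (u : V) (p : G.Walk u u), Odd p.length := by
  classical
  by_contra hodd
  push_neg at hodd
  apply h
  have hre : ∀ v : V, G.Reachable ((G.connectedComponentMk v).out) v := fun v =>
    ConnectedComponent.exact (v := (G.connectedComponentMk v).out) (Quot.out_eq _)
  let c : G.Coloring Bool := Coloring.mk (fun v => decide (Odd ((hre v).some.length))) (by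
    intro a b hab hc
    have hr : (G.connectedComponentMk a) = (G.connectedComponentMk b) :=
      ConnectedComponent.connectedComponentMk_eq_of_adj hab
    have hout : (G.connectedComponentMk a).out = (G.connectedComponentMk b).out := by rw [hr]
    set q1 := (hre a).some with hq1
    set q2 := (hre b).some with hq2
    have q2' : G.Walk ((G.connectedComponentMk a).out) b := q2.copy hout.symm rfl
    have hcl := hodd _ (q1.append (Walk.cons hab (q2.copy hout.symm rfl).reverse))
    rw [Nat.not_odd_iff_even] at hcl
    have hlen : (q1.append (Walk.cons hab (q2.copy hout.symm rfl).reverse)).length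
        = q1.length + q2.length + 1 := by
      simp [Walk.length_append, Walk.length_cons, Walk.length_reverse, Walk.length_copy]
      omega
    rw [hlen] at hcl
    have hiff : Odd q1.length ↔ Odd q2.length := by
      have := decide_eq_decide.mp hc
      exact this
    rw [Nat.even_iff] at hcl
    rcases Nat.even_or_odd q1.length with h1 | h1
    · have h2 := (not_iff_not.mpr hiff).mp (Nat.not_odd_iff_even.mpr h1)
      rw [Nat.not_odd_iff_even, Nat.even_iff] at h2
      rw [Nat.even_iff] at h1
      omega
    · have h2 := hiff.mp h1
      rw [Nat.odd_iff] at h1 h2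
      omega)
  simpa using c.colorable


lemma aux_adj {V : Type*} {G : SimpleGraph V} {u : V} (p : G.Walk u u) [NeZero p.length]
    (i : ZMod p.length) : G.Adj (p.getVert i.val) (p.getVert (i + 1).val) := by
  have hiv : i.val < p.length := ZMod.val_lt i
  rcases Nat.lt_or_ge (i.val + 1) p.length with hlt | hge
  · haveI : Fact (1 < p.length) := ⟨by omega⟩
    have hval : (i + 1 : ZMod p.length).val = i.val + 1 := by
      rw [ZMod.val_add_of_lt (by rw [ZMod.val_one]; omega), ZMod.val_one]
    rw [hval]
    exact p.adj_getVert_succ hiv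
  · have hiv1 : i.val + 1 = p.length := by omega
    have h0 : (i + 1 : ZMod p.length) = 0 := by
      have h1 : (i + 1 : ZMod p.length) = ((i.val + 1 : ℕ) : ZMod p.length) := by
        rw [Nat.cast_add, Nat.cast_one, ZMod.natCast_zmod_val]
      rw [h1, hiv1, ZMod.natCast_self]
    rw [h0, ZMod.val_zero]
    have h2 : p.getVert 0 = p.getVert (i.val + 1) := by
      rw [p.getVert_zero, hiv1, p.getVert_length]
    rw [h2]
    exact p.adj_getVert_succ hiv

lemma aux_card_le {m k : ℕ} [NeZero m] (hm : m = 2 * k + 1) (T : Finset (ZMod m))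
    (hT : ∀ i : ZMod m, i ∈ T → i + 1 ∈ T → False) : T.card ≤ k := by
  have hdisj : Disjoint T (T.image (· + 1)) := by
    rw [Finset.disjoint_left]
    intro x hxT hximg
    obtain ⟨t, ht, rfl⟩ := Finset.mem_image.mp hximg
    exact hT t ht hxT
  have himg : (T.image (· + 1)).card = T.card :=
    Finset.card_image_of_injective _ (add_left_injective 1)
  have hle : (T ∪ T.image (· + 1)).card ≤ Fintype.card (ZMod m) := Finset.card_le_univ _
  rw [Finset.card_union_of_disjoint hdisj, himg, ZMod.card] at hle
  omega

lemma aux_sum_comm {ι κ : Type*} [Fintype ι] [Fintype κ] (P : ι → κ → Prop)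
    [∀ i k, Decidable (P i k)] :
    ∑ i : ι, (univ.filter (P i)).card = ∑ k : κ, (univ.filter (fun i => P i k)).card := by
  simp only [Finset.card_filter]
  exact Finset.sum_comm

theorem stmt8 [Fintype α] (G : SimpleGraph α) (hG : VertexTransitive G)
    (hE : G.edgeSet.Nonempty) (heq : 2 * _root_.indepNum G = Fintype.card α) :
    G.Colorable 2 := by
  classical
  by_contra hc
  obtain ⟨u, p, hodd⟩ := aux_odd_walk hc
  haveI : NeZero p.length := ⟨by have := hodd.pos; omega⟩
  obtain ⟨k, hk⟩ := hodd
  -- maximum independent set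
  obtain ⟨A, hA⟩ := Gᶜ.exists_isNClique_cliqueNum
  have hAcard : A.card = _root_.indepNum G := hA.2
  have hAind : ∀ {x y : α}, x ∈ A → y ∈ A → G.Adj x y → False := by
    intro x y hx hy hxy
    rcases eq_or_ne x y with rfl | hne
    · exact G.loopless.irrefl _ hxy
    · exact ((G.compl_adj x y).mp (hA.1 hx hy hne)).2 hxy
  -- positivity
  haveI : Nonempty α := ⟨(Quot.out hE.choose).1⟩
  have hcard : 0 < Fintype.card α := Fintype.card_pos
  have hαpos : 0 < _root_.indepNum G := by omega
  letI : Fintype (G ≃g G) := Fintype.ofInjective (fun φ : G ≃g G => (φ : α → α))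
    DFunLike.coe_injective
  have hΓpos : 0 < Fintype.card (G ≃g G) := Fintype.card_pos_iff.mpr ⟨RelIso.refl _⟩
  -- the counting function
  set cnt : α → ℕ := fun w => (univ.filter (fun φ : G ≃g G => φ.symm w ∈ A)).card with hcnt
  -- cnt is constant
  have hconst : ∀ w w' : α, cnt w = cnt w' := by
    intro w w'
    obtain ⟨ψ, hψ⟩ := hG w w'
    refine Finset.card_bij' (fun φ _ => φ.trans ψ) (fun φ _ => φ.trans ψ.symm) ?_ ?_ ?_ ?_
    · intro φ hφ
      simp only [Finset.mem_filter, Finset.mem_univ, true_and] at hφ ⊢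
      have : (φ.trans ψ).symm w' = φ.symm w := by
        subst hψ
        have h : ψ w = (φ.trans ψ) (φ.symm w) := by
          rw [RelIso.trans_apply, RelIso.apply_symm_apply]
        rw [h, RelIso.symm_apply_apply]
      rw [this]; exact hφ
    · intro φ hφ
      simp only [Finset.mem_filter, Finset.mem_univ, true_and] at hφ ⊢
      have : (φ.trans ψ.symm).symm w = φ.symm w' := by
        subst hψ
        have h : (φ.trans ψ.symm) (φ.symm (ψ w)) = w := by
          rw [RelIso.trans_apply, RelIso.apply_symm_apply, RelIso.symm_apply_apply]
        conv_lhs => rw [← h]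
        rw [RelIso.symm_apply_apply]
      rw [this]; exact hφ
    · intro φ _; ext x; simp
    · intro φ _; ext x; simp
  obtain ⟨w0⟩ := ‹Nonempty α›
  -- global double counting: card α * cnt w0 = card Γ * A.card
  have hglob : Fintype.card α * cnt w0 = Fintype.card (G ≃g G) * A.card := by
    have h1 : ∑ w : α, cnt w = Fintype.card α * cnt w0 := by
      rw [Finset.sum_congr rfl (fun w _ => hconst w w0)]
      simp [Finset.card_univ, mul_comm]
    have h2 : ∑ w : α, cnt w = ∑ φ : G ≃g G, (univ.filter (fun w : α => φ.symm w ∈ A)).card := by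
      rw [hcnt]
      exact (aux_sum_comm (fun (φ : G ≃g G) (w : α) => φ.symm w ∈ A)).symm
    have h3 : ∀ φ : G ≃g G, (univ.filter (fun w : α => φ.symm w ∈ A)).card = A.card := by
      intro φ
      refine Finset.card_bij' (fun w _ => φ.symm w) (fun a _ => φ a) ?_ ?_ ?_ ?_
      · intro w hw; simpa using hw
      · intro a ha; simp [ha]
      · intro w _; simp
      · intro a _; simp
    rw [← h1, h2, Finset.sum_congr rfl (fun φ _ => h3 φ), Finset.sum_const, Finset.card_univ,
      smul_eq_mul]
  -- local counting along the odd closed walk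
  have hloc : p.length * cnt w0 ≤ Fintype.card (G ≃g G) * k := by
    have h1 : ∑ i : ZMod p.length, cnt (p.getVert i.val) = p.length * cnt w0 := by
      rw [Finset.sum_congr rfl (fun i _ => hconst (p.getVert i.val) w0)]
      simp [Finset.card_univ, ZMod.card, mul_comm]
    have h2 : ∑ i : ZMod p.length, cnt (p.getVert i.val)
        = ∑ φ : G ≃g G,
          (univ.filter (fun i : ZMod p.length => φ.symm (p.getVert i.val) ∈ A)).card := by
      rw [hcnt]
      exact (aux_sum_comm (fun (φ : G ≃g G) (i : ZMod p.length) =>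
        φ.symm (p.getVert i.val) ∈ A)).symm
    have h3 : ∀ φ : G ≃g G,
        (univ.filter (fun i : ZMod p.length => φ.symm (p.getVert i.val) ∈ A)).card ≤ k := by
      intro φ
      refine aux_card_le hk _ ?_
      intro i hi hi1
      simp only [Finset.mem_filter, Finset.mem_univ, true_and] at hi hi1
      exact hAind hi hi1 (φ.symm.map_adj_iff.mpr (aux_adj p i))
    calc p.length * cnt w0 = ∑ i : ZMod p.length, cnt (p.getVert i.val) := h1.symm
      _ = _ := h2
      _ ≤ ∑ _φ : G ≃g G, k := Finset.sum_le_sum (fun φ _ => h3 φ)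
      _ = Fintype.card (G ≃g G) * k := by simp [Finset.card_univ, mul_comm]
  -- derive contradiction
  rw [hAcard, ← heq] at hglob
  have hΓ : Fintype.card (G ≃g G) = 2 * cnt w0 := by
    have h4 : 2 * cnt w0 * _root_.indepNum G = Fintype.card (G ≃g G) * _root_.indepNum G := by
      rw [← hglob]; ring
    exact (Nat.eq_of_mul_eq_mul_right hαpos h4).symm
  rw [hk, hΓ] at hloc
  have hc0 : 0 < cnt w0 := by omega
  have : 2 * k * cnt w0 + cnt w0 ≤ 2 * k * cnt w0 := by
    calc 2 * k * cnt w0 + cnt w0 = (2 * k + 1) * cnt w0 := by ring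
      _ ≤ 2 * cnt w0 * k := hloc
      _ = 2 * k * cnt w0 := by ring
  omega
end

section
/- Let G be a finite vertex-transitive bipartite graph with at least one edge, and suppose A is an independent set of G with 0 < |A| < α(G) and |A|·|V(G)| = α(G)·|N[A]|. Then G is disconnected. -/
open Finset SimpleGraph

variable {α β : Type*}

/-- A set of vertices is independent iff it is a clique in the complement. -/
def IsIndepSet' (G : SimpleGraph α) (s : Set α) : Prop := Gᶜ.IsClique s

/-- The independence number: the clique number of the complement. -/
noncomputable def indepNum' (G : SimpleGraph α) : ℕ := Gᶜ.cliqueNum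

section Aux

variable [Fintype α] [DecidableEq α] {G : SimpleGraph α} [DecidableRel G.Adj]

lemma aux_sum_comm_s10 (S T : Finset α) :
    ∑ a ∈ S, (T.filter (fun b => G.Adj a b)).card =
    ∑ b ∈ T, (S.filter (fun a => G.Adj a b)).card := by
  simp only [card_filter]
  exact Finset.sum_comm

lemma aux_row {d : ℕ} (hreg : ∀ v, G.degree v = d) {S T : Finset α}
    (hST : ∀ a ∈ S, G.neighborFinset a ⊆ T) :
    ∑ a ∈ S, (T.filter (fun b => G.Adj a b)).card = d * S.card := by
  have h : ∀ a ∈ S, (T.filter (fun b => G.Adj a b)).card = d := by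
    intro a ha
    have : T.filter (fun b => G.Adj a b) = G.neighborFinset a := by
      ext b
      simp only [mem_filter, mem_neighborFinset]
      exact ⟨fun h => h.2, fun h => ⟨hST a ha (by simpa [mem_neighborFinset]), h⟩⟩
    rw [this, card_neighborFinset_eq_degree, hreg]
  rw [Finset.sum_congr rfl h, Finset.sum_const, smul_eq_mul, mul_comm]

lemma aux_col_le {d : ℕ} (hreg : ∀ v, G.degree v = d) (S T : Finset α) :
    ∑ b ∈ T, (S.filter (fun a => G.Adj a b)).card ≤ d * T.card := by
  calc ∑ b ∈ T, (S.filter (fun a => G.Adj a b)).card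
      ≤ ∑ b ∈ T, d := by
        refine Finset.sum_le_sum fun b _ => ?_
        rw [← hreg b, ← card_neighborFinset_eq_degree]
        exact card_le_card (fun a ha => by
          simp only [mem_filter] at ha
          simpa [mem_neighborFinset] using ha.2.symm)
    _ = d * T.card := by rw [Finset.sum_const, smul_eq_mul, mul_comm]

lemma hall_le {d : ℕ} (hreg : ∀ v, G.degree v = d) (hd : 0 < d) (S : Finset α) :
    S.card ≤ (S.biUnion (fun a => G.neighborFinset a)).card := by
  have h1 : ∑ a ∈ S, ((S.biUnion (fun a => G.neighborFinset a)).filter (fun b => G.Adj a b)).card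
      = d * S.card :=
    aux_row hreg (fun a ha b hb => Finset.mem_biUnion.2 ⟨a, ha, hb⟩)
  have h2 := aux_col_le hreg S (S.biUnion (fun a => G.neighborFinset a))
  rw [aux_sum_comm_s10] at h1
  exact Nat.le_of_mul_le_mul_left (h1 ▸ h2) hd

lemma hall_eq {d : ℕ} (hreg : ∀ v, G.degree v = d) (hd : 0 < d) {S : Finset α}
    (hcard : (S.biUnion (fun a => G.neighborFinset a)).card ≤ S.card) :
    ∀ b ∈ S.biUnion (fun a => G.neighborFinset a), G.neighborFinset b ⊆ S := by
  set T := S.biUnion (fun a => G.neighborFinset a) with hT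
  have h1 : ∑ b ∈ T, (S.filter (fun a => G.Adj a b)).card = d * S.card := by
    rw [← aux_sum_comm_s10]
    exact aux_row hreg (fun a ha b hb => Finset.mem_biUnion.2 ⟨a, ha, hb⟩)
  have hub : ∀ b ∈ T, (S.filter (fun a => G.Adj a b)).card ≤ d := by
    intro b _
    rw [← hreg b, ← card_neighborFinset_eq_degree]
    exact card_le_card (fun a ha => by
      simp only [mem_filter] at ha
      simpa [mem_neighborFinset] using ha.2.symm)
  have hall : ∀ b ∈ T, (S.filter (fun a => G.Adj a b)).card = d := by
    by_contra hc
    push_neg at hc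
    obtain ⟨b, hb, hbne⟩ := hc
    have hlt : ∑ b ∈ T, (S.filter (fun a => G.Adj a b)).card < ∑ _b ∈ T, d :=
      Finset.sum_lt_sum hub ⟨b, hb, lt_of_le_of_ne (hub b hb) hbne⟩
    rw [h1, Finset.sum_const, smul_eq_mul] at hlt
    exact absurd hlt (not_lt.2 (by rw [mul_comm]; exact Nat.mul_le_mul_left d hcard))
  intro b hb
  have hsub : S.filter (fun a => G.Adj a b) ⊆ G.neighborFinset b := fun a ha => by
    simp only [mem_filter] at ha
    simpa [mem_neighborFinset] using ha.2.symm
  have : S.filter (fun a => G.Adj a b) = G.neighborFinset b := by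
    apply Finset.eq_of_subset_of_card_le hsub
    rw [card_neighborFinset_eq_degree, hreg, hall b hb]
  rw [← this]
  exact Finset.filter_subset _ _

lemma closed_univ {G : SimpleGraph α} (hconn : G.Connected) {s : Set α} (hne : s.Nonempty)
    (hcl : ∀ a ∈ s, ∀ b, G.Adj a b → b ∈ s) : ∀ v, v ∈ s := by
  obtain ⟨a, ha⟩ := hne
  have key : ∀ {x y : α} (_ : G.Walk x y), x ∈ s → y ∈ s := by
    intro x y w
    induction w with
    | nil => exact id
    | cons h p ih => exact fun hx => ih (hcl _ hx _ h)
  intro v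
  obtain ⟨w⟩ := hconn.preconnected a v
  exact key w ha

lemma key_lemma {G : SimpleGraph α} [DecidableRel G.Adj] (hconn : G.Connected)
    {P Q S : Finset α} (hPQ : Disjoint P Q) (hPQu : P ∪ Q = Finset.univ)
    (hSP : S ⊆ P) (hNQ : S.biUnion (fun a => G.neighborFinset a) ⊆ Q)
    (hSne : S.Nonempty)
    (hclosed : ∀ b ∈ S.biUnion (fun a => G.neighborFinset a), G.neighborFinset b ⊆ S) :
    S = P ∧ Q ⊆ S.biUnion (fun a => G.neighborFinset a) := by
  set T := S.biUnion (fun a => G.neighborFinset a) with hT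
  have huniv : ∀ v : α, v ∈ (↑(S ∪ T) : Set α) := by
    apply closed_univ hconn
    · obtain ⟨a, ha⟩ := hSne
      exact ⟨a, by simp only [Finset.coe_union, Set.mem_union, mem_coe]; exact Or.inl ha⟩
    · intro a ha b hab
      simp only [Finset.coe_union, Set.mem_union, mem_coe] at ha ⊢
      rcases ha with ha | ha
      · exact Or.inr (Finset.mem_biUnion.2 ⟨a, ha, (mem_neighborFinset _ _ _).2 hab⟩)
      · exact Or.inl (hclosed a ha ((mem_neighborFinset _ _ _).2 hab))
  have hmem : ∀ v : α, v ∈ S ∪ T := fun v => by simpa using huniv v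
  constructor
  · apply Finset.Subset.antisymm hSP
    intro p hp
    rcases Finset.mem_union.1 (hmem p) with h | h
    · exact h
    · exact absurd (hNQ h) (fun hq => (Finset.disjoint_left.1 hPQ) hp hq)
  · intro q hq
    rcases Finset.mem_union.1 (hmem q) with h | h
    · exact absurd (hSP h) (fun hp => (Finset.disjoint_left.1 hPQ) hp hq)
    · exact h

end Aux


theorem stmt10 [Fintype α] (G : SimpleGraph α) (hG : VertexTransitive G)
    (hbip : G.Colorable 2) (hE : G.edgeSet.Nonempty)
    (A : Set α) (hA : IsIndepSet' G A)
    (hpos : 0 < A.ncard) (hlt : A.ncard < indepNum' G)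
    (heq : A.ncard * Fintype.card α = indepNum' G * (closedNbhd G A).ncard) :
    ¬ G.Connected := by
  classical
  intro hconn
  obtain ⟨C⟩ := hbip
  obtain ⟨u, v, huv⟩ : ∃ u v : α, G.Adj u v := by
    obtain ⟨e, he⟩ := hE
    induction e using Sym2.ind with | _ u v => exact ⟨u, v, he⟩
  set d := G.degree u with hd_def
  have hreg : ∀ w, G.degree w = d := by
    intro w
    obtain ⟨φ, hφ⟩ := hG u w
    have h := Fintype.card_congr (Iso.mapNeighborSet φ u)
    rw [G.card_neighborSet_eq_degree, G.card_neighborSet_eq_degree, hφ] at h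
    exact h.symm
  have hd : 0 < d := by
    rw [hd_def]
    exact G.degree_pos_iff_exists_adj u |>.2 ⟨v, huv⟩
  have h01 : ∀ x : Fin 2, x ≠ 0 → x = 1 := by decide
  set X : Finset α := Finset.univ.filter (fun w => C w = 0) with hXdef
  set Y : Finset α := Finset.univ.filter (fun w => C w = 1) with hYdef
  have hdisj : Disjoint X Y := by
    rw [Finset.disjoint_left]
    intro a ha hb
    simp only [hXdef, hYdef, mem_filter] at ha hb
    rw [ha.2] at hb
    exact absurd hb.2 (by decide)
  have hunion : X ∪ Y = Finset.univ := by
    ext w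
    simp only [hXdef, hYdef, mem_union, mem_filter, mem_univ, true_and, iff_true]
    rcases eq_or_ne (C w) 0 with h | h
    · exact Or.inl h
    · exact Or.inr (h01 _ h)
  have hXY : ∀ a ∈ X, G.neighborFinset a ⊆ Y := by
    intro a ha b hb
    rw [mem_neighborFinset] at hb
    simp only [hXdef, mem_filter, mem_univ, true_and] at ha
    simp only [hYdef, mem_filter, mem_univ, true_and]
    exact h01 _ (fun h => (C.valid hb) (by rw [ha, h]))
  have hYX : ∀ a ∈ Y, G.neighborFinset a ⊆ X := by
    intro a ha b hb
    rw [mem_neighborFinset] at hb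
    simp only [hYdef, mem_filter, mem_univ, true_and] at ha
    simp only [hXdef, mem_filter, mem_univ, true_and]
    by_contra h
    exact (C.valid hb) (by rw [ha, h01 _ h])
  have hcardXY : X.card = Y.card := by
    have h1 := aux_row hreg hXY
    rw [aux_sum_comm_s10] at h1
    have h2 : ∑ b ∈ Y, (X.filter (fun a => G.Adj a b)).card = d * Y.card := by
      have hflip : ∀ b, X.filter (fun a => G.Adj a b) = X.filter (fun a => G.Adj b a) := by
        intro b; apply Finset.filter_congr; intro a _; rw [G.adj_comm]
      simp only [hflip]
      exact aux_row hreg hYX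
    exact Nat.eq_of_mul_eq_mul_left hd (h1.symm.trans h2)
  have hn : Fintype.card α = 2 * Y.card := by
    rw [← Finset.card_univ, ← hunion, Finset.card_union_of_disjoint hdisj, hcardXY]
    ring
  -- independence number equals |Y|
  have hsplit_card : ∀ s : Finset α, s.card = (s ∩ X).card + (s ∩ Y).card := by
    intro s
    rw [← Finset.card_union_of_disjoint (hdisj.mono inter_subset_right inter_subset_right),
      ← Finset.inter_union_distrib_left, hunion, Finset.inter_univ]
  have hbound : ∀ s : Finset α, Gᶜ.IsClique ↑s → s.card ≤ Y.card := by
    intro s hs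
    have hnoedge : ∀ a ∈ s, ∀ b ∈ s, ¬ G.Adj a b := by
      intro a ha b hb hadj
      have := hs (by exact_mod_cast ha) (by exact_mod_cast hb) hadj.ne
      rw [compl_adj] at this
      exact this.2 hadj
    have h1 : (s ∩ X).card ≤ ((s ∩ X).biUnion (fun a => G.neighborFinset a)).card :=
      hall_le hreg hd _
    have h2 : (s ∩ X).biUnion (fun a => G.neighborFinset a) ⊆ Y \ (s ∩ Y) := by
      intro b hb
      obtain ⟨a, ha, hab⟩ := Finset.mem_biUnion.1 hb
      rw [mem_neighborFinset] at hab
      rw [Finset.mem_sdiff]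
      refine ⟨hXY a (Finset.mem_of_mem_inter_right ha) ((mem_neighborFinset _ _ _).2 hab), ?_⟩
      intro hbs
      exact hnoedge a (Finset.mem_of_mem_inter_left ha) b (Finset.mem_of_mem_inter_left hbs) hab
    have h3 := Finset.card_le_card h2
    rw [Finset.card_sdiff_of_subset inter_subset_right] at h3
    have h4 : (s ∩ Y).card ≤ Y.card := Finset.card_le_card inter_subset_right
    rw [hsplit_card s]
    omega
  have hYind : Gᶜ.IsClique (↑Y : Set α) := by
    intro a ha b hb hne
    rw [compl_adj]
    refine ⟨hne, fun hadj => ?_⟩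
    simp only [hYdef, Finset.coe_filter, Set.mem_setOf_eq, Finset.mem_coe, mem_filter] at ha hb
    exact C.valid hadj (by rw [ha.2, hb.2])
  have hind : indepNum' G = Y.card := by
    refine le_antisymm ?_ ?_
    · obtain ⟨s, hs⟩ := Gᶜ.exists_isNClique_cliqueNum
      rw [show indepNum' G = Gᶜ.cliqueNum from rfl, ← hs.card_eq]
      exact hbound s hs.isClique
    · exact IsClique.card_le_cliqueNum (tc := hYind)
  have hYpos : 0 < Y.card := by omega
  -- the independent set A as a finset
  set A' : Finset α := A.toFinset with hA'def
  have hAcard : A.ncard = A'.card := Set.ncard_eq_toFinset_card' A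
  have hnoedgeA : ∀ a ∈ A', ∀ b ∈ A', ¬ G.Adj a b := by
    intro a ha b hb hadj
    have := hA (Set.mem_toFinset.1 ha) (Set.mem_toFinset.1 hb) hadj.ne
    rw [compl_adj] at this
    exact this.2 hadj
  set AX := A' ∩ X with hAXdef
  set AY := A' ∩ Y with hAYdef
  set NX := AX.biUnion (fun a => G.neighborFinset a) with hNXdef
  set NY := AY.biUnion (fun a => G.neighborFinset a) with hNYdef
  have hA'split : A' = AX ∪ AY := by
    rw [hAXdef, hAYdef, ← Finset.inter_union_distrib_left, hunion, Finset.inter_univ]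
  have hNXY : NX ⊆ Y := by
    intro b hb
    obtain ⟨a, ha, hab⟩ := Finset.mem_biUnion.1 hb
    exact hXY a (Finset.mem_of_mem_inter_right ha) hab
  have hNYX : NY ⊆ X := by
    intro b hb
    obtain ⟨a, ha, hab⟩ := Finset.mem_biUnion.1 hb
    exact hYX a (Finset.mem_of_mem_inter_right ha) hab
  have hbiU : A'.biUnion (fun a => G.neighborFinset a) = NX ∪ NY := by
    ext b
    simp only [hNXdef, hNYdef, Finset.mem_union, Finset.mem_biUnion]
    constructor
    · rintro ⟨a, ha, hb⟩
      rcases Finset.mem_union.1 (hA'split ▸ ha : a ∈ AX ∪ AY) with h | h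
      · exact Or.inl ⟨a, h, hb⟩
      · exact Or.inr ⟨a, h, hb⟩
    · rintro (⟨a, ha, hb⟩ | ⟨a, ha, hb⟩)
      · exact ⟨a, Finset.mem_of_mem_inter_left ha, hb⟩
      · exact ⟨a, Finset.mem_of_mem_inter_left ha, hb⟩
  have hAdisjN : Disjoint A' (NX ∪ NY) := by
    rw [Finset.disjoint_left]
    intro b hb hbn
    rw [← hbiU] at hbn
    obtain ⟨a, ha, hab⟩ := Finset.mem_biUnion.1 hbn
    exact hnoedgeA a ha b hb ((mem_neighborFinset _ _ _).1 hab)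
  have hNXNY : Disjoint NX NY :=
    (hdisj.symm.mono hNXY hNYX)
  have hclosed_card : (closedNbhd G A).ncard = A'.card + (NX.card + NY.card) := by
    have hfin : (closedNbhd G A).toFinset = A' ∪ (NX ∪ NY) := by
      ext w
      rw [← hbiU]
      rw [Set.mem_toFinset]
      simp only [closedNbhd, Set.mem_toFinset, Set.mem_union, Set.mem_setOf_eq,
        Finset.mem_union, Finset.mem_biUnion, mem_neighborFinset, hA'def, Set.mem_toFinset]
    rw [Set.ncard_eq_toFinset_card', hfin, Finset.card_union_of_disjoint hAdisjN,
      Finset.card_union_of_disjoint hNXNY]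
  -- deduce equalities from heq
  have heq2 : NX.card + NY.card = AX.card + AY.card := by
    rw [hAcard, hind, hn, hclosed_card] at heq
    have := Nat.eq_of_mul_eq_mul_left hYpos
      (show Y.card * (2 * A'.card) = Y.card * (A'.card + (NX.card + NY.card)) by
        rw [← heq]; ring)
    have hs := hsplit_card A'
    rw [← hAXdef, ← hAYdef] at hs
    omega
  have hallX : AX.card ≤ NX.card := hall_le hreg hd AX
  have hallY : AY.card ≤ NY.card := hall_le hreg hd AY
  have hclX : ∀ b ∈ NX, G.neighborFinset b ⊆ AX := hall_eq hreg hd (by rw [← hNXdef]; omega)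
  have hclY : ∀ b ∈ NY, G.neighborFinset b ⊆ AY := hall_eq hreg hd (by rw [← hNYdef]; omega)
  have hA'ne : A'.Nonempty := by
    rw [← Finset.card_pos, ← hAcard]; exact hpos
  have hfin : A'.card = Y.card := by
    have hcases : AX.Nonempty ∨ AY.Nonempty := by
      obtain ⟨a, ha⟩ := hA'ne
      rcases Finset.mem_union.1 (hA'split ▸ ha : a ∈ AX ∪ AY) with h | h
      · exact Or.inl ⟨a, h⟩
      · exact Or.inr ⟨a, h⟩
    rcases hcases with hAXne | hAYne
    · obtain ⟨hAXeq, hYsub⟩ := key_lemma (S := AX) hconn hdisj hunion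
        (by rw [hAXdef]; exact inter_subset_right) hNXY hAXne hclX
      have hAYempty : AY = ∅ := by
        rw [← Finset.subset_empty]
        intro b hb
        have hbY : b ∈ Y := Finset.mem_of_mem_inter_right hb
        have hbN : b ∈ NX := hYsub hbY
        exact absurd (Finset.disjoint_left.1 hAdisjN (Finset.mem_of_mem_inter_left hb)
          (Finset.mem_union_left _ hbN)) (fun h => h)
      rw [hA'split, hAYempty, Finset.union_empty, hAXeq, hcardXY]
    · obtain ⟨hAYeq, hXsub⟩ := key_lemma (S := AY) hconn hdisj.symm
        (by rw [Finset.union_comm]; exact hunion)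
        (by rw [hAYdef]; exact inter_subset_right) hNYX hAYne hclY
      have hAXempty : AX = ∅ := by
        rw [← Finset.subset_empty]
        intro b hb
        have hbX : b ∈ X := Finset.mem_of_mem_inter_right hb
        have hbN : b ∈ NY := hXsub hbX
        exact absurd (Finset.disjoint_left.1 hAdisjN (Finset.mem_of_mem_inter_left hb)
          (Finset.mem_union_right _ hbN)) (fun h => h)
      rw [hA'split, hAXempty, Finset.empty_union, hAYeq]
  rw [hAcard, hind] at hlt
  omega
end

section
/- Let S be an independent set of the direct product G × H, and for each vertex x of H let A_x = {a ∈ V(G) : x ∈ X_a and x has a neighbor in X_a}, where X_a = {y ∈ V(H) : (a,y) ∈ S}. Then A_x is an independent set of G for every x ∈ V(H). -/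
open Finset SimpleGraph

variable {α β : Type*}

theorem stmt13 (G : SimpleGraph α) (H : SimpleGraph β)
    (S : Set (α × β)) (hS : _root_.IsIndepSet (tensorProd G H) S) (x : β) :
    _root_.IsIndepSet G {a : α | (a, x) ∈ S ∧ ∃ y : β, H.Adj x y ∧ (a, y) ∈ S} := by
  intro a ha b hb hab
  obtain ⟨hax, y, hxy, hay⟩ := ha
  obtain ⟨hbx, z, hxz, hbz⟩ := hb
  rw [SimpleGraph.compl_adj]
  refine ⟨hab, fun hadj => ?_⟩
  have h1 : ((a, x) : α × β) ≠ (b, z) := fun h => (hadj.ne (congrArg Prod.fst h)).elim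
  have := hS hax hbz h1
  rw [SimpleGraph.compl_adj] at this
  exact this.2 ⟨hadj, hxz⟩
end

section
/- Let G be a finite vertex-transitive graph and A an independent set of G with |A|·|V(G)| = α(G)·|N[A]|. Then the complement of N[A] in V(G), denoted N̄[A], satisfies: for every maximum independent set S of G, |S ∩ N̄[A]| = α(G) − |A|. -/
open Finset SimpleGraph

variable {α β : Type*}

lemma indep_ncard_le [Fintype α] {G : SimpleGraph α} {s : Set α} (h : _root_.IsIndepSet G s) :
    s.ncard ≤ _root_.indepNum G := by
  classical
  have h2 : Gᶜ.IsClique (s.toFinset : Set α) := by simpa using (show Gᶜ.IsClique s from h)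
  have := SimpleGraph.IsClique.card_le_cliqueNum (G := Gᶜ) (t := s.toFinset) (tc := h2)
  simpa [Set.ncard_eq_toFinset_card', _root_.indepNum] using this

lemma inter_closedNbhd_ge [Fintype α] {G : SimpleGraph α} {A T : Set α}
    (hA : _root_.IsIndepSet G A) (hT : _root_.IsIndepSet G T) (hTcard : T.ncard = _root_.indepNum G) :
    A.ncard ≤ (T ∩ closedNbhd G A).ncard := by
  classical
  set N : Set α := closedNbhd G A with hNdef
  have hAN : A ⊆ N := Set.subset_union_left
  have hindep : _root_.IsIndepSet G ((T \ N) ∪ A) := by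
    intro x hx y hy hxy
    rw [SimpleGraph.compl_adj]
    refine ⟨hxy, fun hadj => ?_⟩
    rcases hx with hx | hx <;> rcases hy with hy | hy
    · exact ((hT hx.1 hy.1 hxy).2 hadj)
    · exact hx.2 (Or.inr ⟨y, hy, hadj.symm⟩)
    · exact hy.2 (Or.inr ⟨x, hx, hadj⟩)
    · exact ((hA hx hy hxy).2 hadj)
  have h1 : ((T \ N) ∪ A).ncard ≤ _root_.indepNum G := indep_ncard_le hindep
  have hdisj : Disjoint (T \ N) A := by
    rw [Set.disjoint_right]
    exact fun a ha hin => hin.2 (hAN ha)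
  have h2 : ((T \ N) ∪ A).ncard = (T \ N).ncard + A.ncard :=
    Set.ncard_union_eq hdisj (Set.toFinite _) (Set.toFinite _)
  have h3 : (T ∩ N).ncard + (T \ N).ncard = T.ncard :=
    Set.ncard_inter_add_ncard_diff_eq_ncard T N (Set.toFinite T)
  omega

lemma key_lemma_s18 [Fintype α] (G : SimpleGraph α) (hG : VertexTransitive G)
    (A : Set α) (hA : _root_.IsIndepSet G A)
    (heq : A.ncard * Fintype.card α = _root_.indepNum G * (closedNbhd G A).ncard)
    (S : Set α) (hS : _root_.IsIndepSet G S) (hScard : S.ncard = _root_.indepNum G) :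
    (S ∩ closedNbhd G A).ncard = A.ncard := by
  classical
  cases isEmpty_or_nonempty α with
  | inl h =>
    simp [Set.eq_empty_of_isEmpty S, Set.eq_empty_of_isEmpty A]
  | inr hne =>
  set N : Set α := closedNbhd G A with hNdef
  set NF : Finset α := N.toFinset with hNF
  set SF : Finset α := S.toFinset with hSF
  set Γ : Finset (Equiv.Perm α) :=
    Finset.univ.filter (fun e => ∀ u v, G.Adj (e u) (e v) ↔ G.Adj u v) with hΓ
  have memΓ : ∀ e : Equiv.Perm α, e ∈ Γ ↔ ∀ u v, G.Adj (e u) (e v) ↔ G.Adj u v := by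
    intro e; simp [hΓ]
  have hone : Equiv.refl α ∈ Γ := by simp [hΓ]
  have htrans : ∀ u v : α, ∃ e ∈ Γ, e u = v := by
    intro u v
    obtain ⟨φ, hφ⟩ := hG u v
    exact ⟨φ.toEquiv, (memΓ _).2 (fun a b => φ.map_rel_iff), hφ⟩
  have hcomp : ∀ e f : Equiv.Perm α, e ∈ Γ → f ∈ Γ → e.trans f ∈ Γ := by
    intro e f he hf
    rw [memΓ] at *
    intro u v
    simpa using ((hf (e u) (e v)).trans (he u v))
  have hinv : ∀ e : Equiv.Perm α, e ∈ Γ → e.symm ∈ Γ := by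
    intro e he
    rw [memΓ] at *
    intro u v
    conv_rhs => rw [← e.apply_symm_apply u, ← e.apply_symm_apply v, he]
  -- fibers all have the same cardinality
  have hfib : ∀ v s v' s' : α,
      (Γ.filter (fun e => e v = s)).card = (Γ.filter (fun e => e v' = s')).card := by
    intro v s v' s'
    obtain ⟨g, hgΓ, hg⟩ := htrans v' v
    obtain ⟨k, hkΓ, hk⟩ := htrans s s'
    apply Finset.card_bij' (i := fun e _ => (g.trans e).trans k)
      (j := fun e _ => (g.symm.trans e).trans k.symm)
    · intro e he
      simp only [Finset.mem_filter] at he ⊢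
      refine ⟨hcomp _ _ (hcomp _ _ hgΓ he.1) hkΓ, ?_⟩
      simp [hg, he.2, hk]
    · intro e he
      simp only [Finset.mem_filter] at he ⊢
      refine ⟨hcomp _ _ (hcomp _ _ (hinv _ hgΓ) he.1) (hinv _ hkΓ), ?_⟩
      simp only [Equiv.trans_apply]
      rw [← hg] at *
      simp [he.2, ← hk]
    · intro e he; ext x; simp
    · intro e he; ext x; simp
  obtain ⟨v₀⟩ := hne
  set c : ℕ := (Γ.filter (fun e => e v₀ = v₀)).card with hc
  have hc1 : 1 ≤ c := by
    apply Finset.card_pos.2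
    exact ⟨Equiv.refl α, by simp [hone]⟩
  -- |Γ| = n * c
  have hΓcard : Γ.card = Fintype.card α * c := by
    have h0 : Γ.card = ∑ s ∈ Finset.univ, (Γ.filter (fun e => e v₀ = s)).card :=
      Finset.card_eq_sum_card_fiberwise (fun e _ => Finset.mem_univ _)
    rw [h0]
    rw [Finset.sum_congr rfl (fun s _ => hfib v₀ s v₀ v₀)]
    simp [Finset.card_univ, mul_comm, hc]
  -- terms
  set term : Equiv.Perm α → ℕ := fun e => (NF.filter (fun v => e v ∈ SF)).card with hterm
  -- total sum
  have hsum : ∑ e ∈ Γ, term e = NF.card * (SF.card * c) := by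
    have h1 : ∀ e, term e = ∑ v ∈ NF, (if e v ∈ SF then 1 else 0) := by
      intro e; rw [Finset.sum_boole]; simp [hterm]
    have h2 : ∀ v : α, (Γ.filter (fun e => e v ∈ SF)).card = SF.card * c := by
      intro v
      have h0 : (Γ.filter (fun e => e v ∈ SF)).card
          = ∑ s ∈ SF, ((Γ.filter (fun e => e v ∈ SF)).filter (fun e => e v = s)).card :=
        Finset.card_eq_sum_card_fiberwise (fun e he => (Finset.mem_filter.1 he).2)
      rw [h0]
      have h3 : ∀ s ∈ SF, ((Γ.filter (fun e => e v ∈ SF)).filter (fun e => e v = s)).card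
          = (Γ.filter (fun e => e v = s)).card := by
        intro s hs
        congr 1
        rw [Finset.filter_filter]
        apply Finset.filter_congr
        intro e _
        constructor
        · exact fun h => h.2
        · exact fun h => ⟨h ▸ hs, h⟩
      rw [Finset.sum_congr rfl h3, Finset.sum_congr rfl (fun s _ => hfib v s v₀ v₀)]
      simp [mul_comm, hc]
    calc ∑ e ∈ Γ, term e = ∑ e ∈ Γ, ∑ v ∈ NF, (if e v ∈ SF then 1 else 0) := by
          exact Finset.sum_congr rfl (fun e _ => h1 e)
      _ = ∑ v ∈ NF, ∑ e ∈ Γ, (if e v ∈ SF then 1 else 0) := Finset.sum_comm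
      _ = ∑ v ∈ NF, (Γ.filter (fun e => e v ∈ SF)).card := by
          refine Finset.sum_congr rfl (fun v _ => ?_)
          rw [Finset.sum_boole]; simp
      _ = ∑ v ∈ NF, SF.card * c := Finset.sum_congr rfl (fun v _ => h2 v)
      _ = NF.card * (SF.card * c) := by rw [Finset.sum_const, smul_eq_mul]
  -- each term is at least |A|
  have hterm_ge : ∀ e ∈ Γ, A.ncard ≤ term e := by
    intro e he
    set T : Set α := e.symm '' S with hT
    have hTind : _root_.IsIndepSet G T := by
      rintro x ⟨a, ha, rfl⟩ y ⟨b, hb, rfl⟩ hxy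
      rw [SimpleGraph.compl_adj]
      refine ⟨hxy, fun hadj => ?_⟩
      have hab : a ≠ b := fun h => hxy (by rw [h])
      have hiff := (memΓ e).1 he (e.symm a) (e.symm b)
      simp only [Equiv.apply_symm_apply] at hiff
      exact (hS ha hb hab).2 (hiff.2 hadj)
    have hTcard : T.ncard = _root_.indepNum G := by
      rw [hT, Set.ncard_image_of_injective _ e.symm.injective, hScard]
    have hge := inter_closedNbhd_ge hA hTind hTcard
    have hcard : (T ∩ N).ncard = term e := by
      rw [Set.ncard_eq_toFinset_card']
      congr 1
      ext x
      simp only [Set.mem_toFinset, Set.mem_inter_iff, hT, Finset.mem_filter, hNF, hSF,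
        Set.mem_image]
      constructor
      · rintro ⟨⟨a, ha, rfl⟩, hxN⟩
        exact ⟨hxN, by simpa using ha⟩
      · rintro ⟨hxN, hex⟩
        exact ⟨⟨e x, hex, by simp⟩, hxN⟩
    rw [← hcard]
    exact hge
  -- total equals |Γ| * |A|
  have hNFcard : NF.card = N.ncard := (Set.ncard_eq_toFinset_card' N).symm
  have hSFcard : SF.card = _root_.indepNum G := by
    rw [hSF, ← Set.ncard_eq_toFinset_card', hScard]
  have htot : ∑ e ∈ Γ, term e = Γ.card * A.ncard := by
    rw [hsum, hNFcard, hSFcard, hΓcard]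
    have h9 : N.ncard * (_root_.indepNum G * c) = (_root_.indepNum G * N.ncard) * c := by ring
    rw [h9, ← heq]
    ring
  -- identity term equals |A|
  have hid : term (Equiv.refl α) = A.ncard := by
    by_contra hne2
    have hlt : A.ncard < term (Equiv.refl α) :=
      lt_of_le_of_ne (hterm_ge _ hone) (Ne.symm hne2)
    have hstrict : ∑ _e ∈ Γ, A.ncard < ∑ e ∈ Γ, term e :=
      Finset.sum_lt_sum (fun e he => hterm_ge e he) ⟨_, hone, hlt⟩
    rw [Finset.sum_const, smul_eq_mul, htot] at hstrict
    exact lt_irrefl _ hstrict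
  rw [← hid, Set.ncard_eq_toFinset_card']
  congr 1
  ext x
  simp only [Set.mem_toFinset, Set.mem_inter_iff, Finset.mem_filter, hNF, hSF,
    Equiv.refl_apply, Set.mem_toFinset]
  tauto

theorem stmt18 [Fintype α] (G : SimpleGraph α) (hG : VertexTransitive G)
    (A : Set α) (hA : _root_.IsIndepSet G A)
    (heq : A.ncard * Fintype.card α = _root_.indepNum G * (closedNbhd G A).ncard) :
    ∀ S : Set α, _root_.IsIndepSet G S → S.ncard = _root_.indepNum G →
      (S ∩ (Set.univ \ closedNbhd G A)).ncard = _root_.indepNum G - A.ncard := by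
  intro S hS hScard
  have key := key_lemma_s18 G hG A hA heq S hS hScard
  have hsplit : (S ∩ closedNbhd G A).ncard + (S ∩ (Set.univ \ closedNbhd G A)).ncard
      = S.ncard := by
    have h0 : S ∩ (Set.univ \ closedNbhd G A) = S \ closedNbhd G A := by
      ext x; simp [Set.mem_diff]
    rw [h0]
    exact Set.ncard_inter_add_ncard_diff_eq_ncard S _ (Set.toFinite S)
  omega
end
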